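/- arXiv:2007.11652 — 2 statements merged into one kernel-verified Lean document; each statement's English description precedes it below -/
import Mathlib

section
/- (Good-step bound, pairwise direction) Let A be symmetric nonnegative with zero diagonal, entries a_{ij} ≤ M̄ off-diagonal. Let x ∈ Δ, i maximize (Ax)_i over all components, j minimize (Ax)_j over the support of x, d = e_i − e_j with a_{ij} > 0, γ* = ((Ax)_i − (Ax)_j)/(2a_{ij}), and x⁺ = x + γ* d. Then the Frank-Wolfe gap g = 2((Ax)_i − xᵀAx) satisfies g² ≤ 8M̄ (f(x⁺) − f(x)). -/
open Matrix

/-- Good-step bound, pairwise direction: with nonnegative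
off-diagonal entries bounded by `M̄` and zero diagonal, `i` maximizing
`(A x)_i`, `j` minimizing `(A x)_j` over the support of `x`, `d = e_i - e_j`,
`a_{ij} > 0`, `γ* = ((A x)_i - (A x)_j)/(2 a_{ij})` and `x⁺ = x + γ* d`,
the gap `g = 2 ((A x)_i - xᵀ A x)` satisfies `g² ≤ 8 M̄ (f x⁺ - f x)`. -/
theorem pfw_good_step_bound {n : ℕ}
    (A : Matrix (Fin n) (Fin n) ℝ)
    (hsymm : ∀ i j, A i j = A j i)
    (hnonneg : ∀ i j, 0 ≤ A i j)
    (hdiag : ∀ i, A i i = 0)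
    (Mhi : ℝ) (hbound : ∀ i j, i ≠ j → A i j ≤ Mhi)
    (x : Fin n → ℝ) (hx : x ∈ stdSimplex ℝ (Fin n))
    (i : Fin n) (hi : ∀ k, A.mulVec x k ≤ A.mulVec x i)
    (j : Fin n) (hjsupp : 0 < x j)
    (hj : ∀ k, 0 < x k → A.mulVec x j ≤ A.mulVec x k)
    (hApos : 0 < A i j)
    (d : Fin n → ℝ)
    (hd : d = (Pi.single i 1 : Fin n → ℝ) - (Pi.single j 1 : Fin n → ℝ))
    (γstar : ℝ) (hγ : γstar = (A.mulVec x i - A.mulVec x j) / (2 * A i j))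
    (xplus : Fin n → ℝ) (hxp : xplus = x + γstar • d)
    (g : ℝ) (hg : g = 2 * (A.mulVec x i - x ⬝ᵥ A.mulVec x)) :
    g ^ 2 ≤ 8 * Mhi * (xplus ⬝ᵥ A.mulVec xplus - x ⬝ᵥ A.mulVec x) := by
  have hne : i ≠ j := by
    intro h; rw [h, hdiag] at hApos; exact lt_irrefl _ hApos
  set v := A.mulVec x with hv
  set δ : ℝ := v i - v j with hδ
  set a : ℝ := A i j with ha
  -- single dot products
  have hsingle : ∀ (k : Fin n) (w : Fin n → ℝ), (Pi.single k 1 : Fin n → ℝ) ⬝ᵥ w = w k := by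
    intro k w
    simp [dotProduct, Pi.single_apply]
  have h1 : d ⬝ᵥ A.mulVec x = δ := by
    rw [hd, sub_dotProduct, hsingle, hsingle]
  have hAT : Aᵀ = A := by
    ext k l; exact hsymm l k
  have h2 : x ⬝ᵥ A.mulVec d = δ := by
    rw [Matrix.dotProduct_mulVec, ← Matrix.mulVec_transpose, hAT, dotProduct_comm, h1]
  have hmvd : ∀ k, A.mulVec d k = A k i - A k j := by
    intro k
    rw [hd]
    simp [Matrix.mulVec, dotProduct, Pi.single_apply, mul_sub]
  have h3 : d ⬝ᵥ A.mulVec d = -(2 * a) := by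
    have he : d ⬝ᵥ A.mulVec d = (A.mulVec d) i - (A.mulVec d) j := by
      nth_rewrite 1 [hd]
      rw [sub_dotProduct, hsingle, hsingle]
    rw [he, hmvd, hmvd, hdiag, hdiag, hsymm j i, ha]
    ring
  -- expansion
  have hexp : xplus ⬝ᵥ A.mulVec xplus - x ⬝ᵥ A.mulVec x
      = 2 * γstar * δ - γstar ^ 2 * (2 * a) := by
    rw [hxp]
    rw [Matrix.mulVec_add, Matrix.mulVec_smul, dotProduct_add, add_dotProduct,
      add_dotProduct, smul_dotProduct, dotProduct_smul, smul_dotProduct,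
      dotProduct_smul, h1, h2, h3]
    simp only [smul_eq_mul]
    ring
  have ha0 : (0:ℝ) < a := hApos
  have hγδ : γstar = δ / (2 * a) := by rw [hγ]
  have hdiff : xplus ⬝ᵥ A.mulVec xplus - x ⬝ᵥ A.mulVec x = δ ^ 2 / (2 * a) := by
    rw [hexp, hγδ]
    field_simp
    ring
  -- g bounds
  have hxsum : ∑ k, x k = 1 := hx.2
  have hxnn : ∀ k, 0 ≤ x k := hx.1
  have hquad : x ⬝ᵥ A.mulVec x = ∑ k, x k * v k := rfl
  have hub : x ⬝ᵥ A.mulVec x ≤ v i := by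
    rw [hquad]
    calc ∑ k, x k * v k ≤ ∑ k, x k * v i :=
          Finset.sum_le_sum fun k _ => mul_le_mul_of_nonneg_left (hi k) (hxnn k)
      _ = v i := by rw [← Finset.sum_mul, hxsum, one_mul]
  have hlb : v j ≤ x ⬝ᵥ A.mulVec x := by
    rw [hquad]
    calc v j = ∑ k, x k * v j := by rw [← Finset.sum_mul, hxsum, one_mul]
      _ ≤ ∑ k, x k * v k := by
          apply Finset.sum_le_sum
          intro k _
          rcases lt_or_eq_of_le (hxnn k) with hk | hk
          · exact mul_le_mul_of_nonneg_left (hj k hk) (le_of_lt hk)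
          · rw [← hk]; simp
  have hg0 : 0 ≤ g := by rw [hg]; linarith
  have hg2 : g ≤ 2 * δ := by rw [hg, hδ]; linarith
  have hgsq : g ^ 2 ≤ 4 * δ ^ 2 := by nlinarith
  rw [hdiff]
  have hMa : a ≤ Mhi := hbound i j hne
  have ht : δ ^ 2 / (2 * a) * (2 * a) = δ ^ 2 := by
    field_simp
  have htnn : 0 ≤ δ ^ 2 / (2 * a) := by positivity
  nlinarith [mul_le_mul_of_nonneg_left hMa htnn]
end

section
/- (Swap/drop step count for pairwise FW) In a sequence of pairwise FW iterates on Δ ⊂ ℝ^n where function values strictly increase at good steps and remain distinct across iterates, at most 3·n! consecutive swap/drop steps can occur between two good steps: the number of multisets permutations bound ∑_{ℓ=1}^{m} n!/(n−ℓ)! ≤ n!·e ≤ 3·n! holds for any 1 ≤ m ≤ n. -/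
/-- Swap/drop step count bound for pairwise FW, combinatorial
core: for any `1 ≤ m ≤ n`,
`∑_{ℓ=1}^{m} n!/(n-ℓ)! ≤ e · n! ≤ 3 · n!`. -/
theorem pfw_swap_count_bound (n m : ℕ) (hn : 1 ≤ n) (hm : 1 ≤ m) (hmn : m ≤ n) :
    (∑ ℓ ∈ Finset.Icc 1 m, ((n.factorial / (n - ℓ).factorial : ℕ) : ℝ))
      ≤ Real.exp 1 * n.factorial ∧
    Real.exp 1 * (n.factorial : ℝ) ≤ 3 * n.factorial := by
  constructor
  · have h1 : (∑ ℓ ∈ Finset.Icc 1 m, ((n.factorial / (n - ℓ).factorial : ℕ) : ℝ))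
        = (n.factorial : ℝ) * ∑ ℓ ∈ Finset.Icc 1 m, (1 / ((n - ℓ).factorial : ℝ)) := by
      rw [Finset.mul_sum]
      refine Finset.sum_congr rfl ?_
      intro ℓ hℓ
      have hℓn : ℓ ≤ n := le_trans (Finset.mem_Icc.mp hℓ).2 hmn
      have hdvd : (n - ℓ).factorial ∣ n.factorial :=
        Nat.factorial_dvd_factorial (Nat.sub_le n ℓ)
      rw [Nat.cast_div hdvd (by positivity)]
      ring
    rw [h1]
    have h2 : ∑ ℓ ∈ Finset.Icc 1 m, (1 / ((n - ℓ).factorial : ℝ)) ≤ Real.exp 1 := by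
      have himg : ∑ ℓ ∈ Finset.Icc 1 m, (1 / ((n - ℓ).factorial : ℝ))
          = ∑ k ∈ (Finset.Icc 1 m).image (fun ℓ => n - ℓ), (1 / ((k).factorial : ℝ)) := by
        rw [Finset.sum_image]
        intro a ha b hb hab
        have : a ≤ n := le_trans (Finset.mem_Icc.mp ha).2 hmn
        have : b ≤ n := le_trans (Finset.mem_Icc.mp hb).2 hmn
        beta_reduce at hab
        omega
      rw [himg]
      have hsub : (Finset.Icc 1 m).image (fun ℓ => n - ℓ) ⊆ Finset.range n := by
        intro k hk
        simp only [Finset.mem_image, Finset.mem_Icc] at hk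
        obtain ⟨ℓ, ⟨h1ℓ, hℓm⟩, rfl⟩ := hk
        simp only [Finset.mem_range]
        omega
      calc ∑ k ∈ (Finset.Icc 1 m).image (fun ℓ => n - ℓ), (1 / ((k).factorial : ℝ))
          ≤ ∑ k ∈ Finset.range n, (1 / ((k).factorial : ℝ)) := by
            apply Finset.sum_le_sum_of_subset_of_nonneg hsub
            intro i _ _; positivity
        _ ≤ Real.exp 1 := by
            have := Real.sum_le_exp_of_nonneg (x := 1) zero_le_one n
            simpa [one_pow] using this
    calc (n.factorial : ℝ) * ∑ ℓ ∈ Finset.Icc 1 m, (1 / ((n - ℓ).factorial : ℝ))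
        ≤ (n.factorial : ℝ) * Real.exp 1 := by
          apply mul_le_mul_of_nonneg_left h2 (by positivity)
      _ = Real.exp 1 * n.factorial := by ring
  · have h3 : Real.exp 1 ≤ 3 := le_of_lt (lt_trans Real.exp_one_lt_d9 (by norm_num))
    apply mul_le_mul_of_nonneg_right h3 (by positivity)
end
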